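/- Assume k₁ = k₂ = κ and that none of the following holds: κ = 2; k₃ = 3 − κ; k₃ = 5 − κ; (κ, k₃) = (1, 0). Then every z ∈ V with E′(z) ∈ B and F′(z) ∈ B lies in B. In other words, the 𝔰′-invariant part of H¹(ℂℙ¹, T₂) is zero unless (k₁,k₂,k₃) is of the form (2,2,k₃), (κ,κ,3−κ), (κ,κ,5−κ) or (1,1,0). -/

import Mathlib

noncomputable section

open LaurentPolynomial

/-- `L = ℂ[x, x⁻¹]`, the Laurent polynomials over `ℂ`. -/
abbrev L : Type := LaurentPolynomial ℂ

/-- The coefficient of `x^n` in a Laurent polynomial. -/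
def coeffL (p : L) (n : ℤ) : ℂ := p.coeff n

lemma coeffL_zero (n : ℤ) : coeffL 0 n = 0 := rfl

lemma coeffL_add (a b : L) (n : ℤ) : coeffL (a + b) n = coeffL a n + coeffL b n := by
  unfold coeffL; erw [Finsupp.add_apply]; rfl

lemma coeffL_smul (c : ℂ) (a : L) (n : ℤ) : coeffL (c • a) n = c * coeffL a n := by
  unfold coeffL; erw [Finsupp.smul_apply]; rfl

/-- `L₊`: Laurent polynomials involving only nonnegative powers of `x`. -/
def Lplus : Submodule ℂ L where
  carrier := {p | ∀ n : ℤ, n < 0 → coeffL p n = 0}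
  zero_mem' := fun n _ => coeffL_zero n
  add_mem' := by intro a b ha hb n hn; rw [coeffL_add, ha n hn, hb n hn, add_zero]
  smul_mem' := by intro c p hp n hn; rw [coeffL_smul, hp n hn, mul_zero]

/-- `L₋`: Laurent polynomials involving only nonpositive powers of `x`. -/
def Lminus : Submodule ℂ L where
  carrier := {p | ∀ n : ℤ, 0 < n → coeffL p n = 0}
  zero_mem' := fun n _ => coeffL_zero n
  add_mem' := by intro a b ha hb n hn; rw [coeffL_add, ha n hn, hb n hn, add_zero]
  smul_mem' := by intro c p hp n hn; rw [coeffL_smul, hp n hn, mul_zero]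

/-- The derivative `d/dx` on Laurent polynomials. -/
def D (p : L) : L := Finsupp.sum p.coeff fun n a => ((n : ℂ) * a) • T (n - 1)

/-- `V = L⁶`, the model of Čech 1-cochains with values in `T₂`: a tuple
`v = (a₁₂, a₁₃, a₂₃, b₁, b₂, b₃)` (components `v 0, …, v 5`) encodes the
vector field `Σ_{i<j} a_{ij}(x)ξᵢξⱼ∂/∂x + Σ_t b_t(x)ξ₁ξ₂ξ₃∂/∂ξ_t` on `U₀ ∩ U₁`. -/
abbrev V : Type := Fin 6 → L

/-- `B₀ = (L₊)⁶`: cochains holomorphic in `U₀`. -/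
def B0 : Submodule ℂ V := Submodule.pi Set.univ fun _ => Lplus

/-- The linear map `v ↦ x^m · (v i)`. -/
def cndA (m : ℤ) (i : Fin 6) : V →ₗ[ℂ] L :=
  (LinearMap.mulLeft ℂ (T m)).comp (LinearMap.proj i)

/-- The linear map `v ↦ x^m · (v i − c·x⁻¹·(v j))`. -/
def cndB (m : ℤ) (c : ℂ) (i j : Fin 6) : V →ₗ[ℂ] L :=
  (LinearMap.mulLeft ℂ (T m)).comp
    (LinearMap.proj i - c • (LinearMap.mulLeft ℂ (T (-1))).comp (LinearMap.proj j))

/-- `B₁`: cochains holomorphic in `U₁`, i.e. `v` with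
`x^(kᵢ+kⱼ−2)·a_{ij} ∈ L₋` for all `i < j` and
`x^(d−k_t)·(b_t − σ_t·k_t·x⁻¹·a_{(t)}) ∈ L₋` for `t = 1, 2, 3`
(σ₁ = 1, σ₂ = −1, σ₃ = 1, a₍₁₎ = a₂₃, a₍₂₎ = a₁₃, a₍₃₎ = a₁₂, d = k₁+k₂+k₃). -/
def B1 (k1 k2 k3 : ℤ) : Submodule ℂ V :=
  Lminus.comap (cndA (k1 + k2 - 2) 0) ⊓
  Lminus.comap (cndA (k1 + k3 - 2) 1) ⊓
  Lminus.comap (cndA (k2 + k3 - 2) 2) ⊓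
  Lminus.comap (cndB (k2 + k3) ((k1 : ℂ)) 3 2) ⊓
  Lminus.comap (cndB (k1 + k3) (-(k2 : ℂ)) 4 1) ⊓
  Lminus.comap (cndB (k1 + k2) ((k3 : ℂ)) 5 0)

/-- The coboundary subspace `B = B₀ + B₁`. -/
def B (k1 k2 k3 : ℤ) : Submodule ℂ V := B0 ⊔ B1 k1 k2 k3

/-- Action of `e = ∂/∂x` on cocycles: the componentwise derivative. -/
def Eop : V → V := fun v i => D (v i)

/-- Action of `f = ∂/∂y` on cocycles, with components
`a_{ij} ↦ (2 − kᵢ − kⱼ)·x·a_{ij} − x²·a_{ij}′` and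
`b_t ↦ σ_t·k_t·a₍ₜ₎ − (d − k_t)·x·b_t − x²·b_t′`. -/
def Fop (k1 k2 k3 : ℤ) : V → V := fun v =>
  ![((2 - k1 - k2 : ℤ) : ℂ) • (T 1 * v 0) - T 2 * D (v 0),
    ((2 - k1 - k3 : ℤ) : ℂ) • (T 1 * v 1) - T 2 * D (v 1),
    ((2 - k2 - k3 : ℤ) : ℂ) • (T 1 * v 2) - T 2 * D (v 2),
    (k1 : ℂ) • v 2 - ((k2 + k3 : ℤ) : ℂ) • (T 1 * v 3) - T 2 * D (v 3),
    -((k2 : ℂ) • v 1) - ((k1 + k3 : ℤ) : ℂ) • (T 1 * v 4) - T 2 * D (v 4),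
    (k3 : ℂ) • v 0 - ((k1 + k2 : ℤ) : ℂ) • (T 1 * v 5) - T 2 * D (v 5)]

/-- `N(v) = (0, 0, a₁₃, −b₂, 0, 0)`; `e′ = ∂/∂x + ξ₂∂/∂ξ₁` acts by `E′ = E + N`. -/
def Nop : V → V := fun v => ![0, 0, v 1, -v 4, 0, 0]

/-- `M(v) = (0, a₂₃, 0, 0, −b₁, 0)`; `f′ = ∂/∂y + η₁∂/∂η₂` acts by `F′ = F + M`. -/
def Mop : V → V := fun v => ![0, v 2, 0, 0, -v 3, 0]

/-- The action `E′ = E + N` of `e′ = ∂/∂x + ξ₂∂/∂ξ₁`. -/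
def E'op : V → V := fun v => Eop v + Nop v

/-- The action `F′ = F + M` of `f′ = ∂/∂y + η₁∂/∂η₂`. -/
def F'op (k1 k2 k3 : ℤ) : V → V := fun v => Fop k1 k2 k3 v + Mop v

/-- `N″(v) = (0, a₁₂, a₁₃, −b₂, −b₃, 0)`;
`e″ = ∂/∂x + ξ₂∂/∂ξ₁ + ξ₃∂/∂ξ₂` acts by `E″ = E + N″`. -/
def N''op : V → V := fun v => ![0, v 0, v 1, -v 4, -v 5, 0]

/-- `M″(v) = (2a₁₃, 2a₂₃, 0, 0, −2b₁, −2b₂)`;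
`f″ = ∂/∂y + 2η₁∂/∂η₂ + 2η₂∂/∂η₃` acts by `F″ = F + M″`. -/
def M''op : V → V := fun v => ![(2 : ℂ) • v 1, (2 : ℂ) • v 2, 0, 0, -((2 : ℂ) • v 3), -((2 : ℂ) • v 4)]

/-- The action `E″ = E + N″` of `e″`. -/
def E''op : V → V := fun v => Eop v + N''op v

/-- The action `F″ = F + M″` of `f″`. -/
def F''op (k1 k2 k3 : ℤ) : V → V := fun v => Fop k1 k2 k3 v + M''op v


-- ==================== coefficient lemmas ====================

lemma coeffL_T_mul (m : ℤ) (p : L) (n : ℤ) : coeffL (T m * p) n = coeffL p (n - m) := by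
  unfold coeffL
  unfold T
  erw [AddMonoidAlgebra.coeff_single_mul_apply]
  rw [one_mul]; ring_nf

lemma coeffL_T (m n : ℤ) : coeffL (T m) n = if n = m then 1 else 0 := by
  unfold coeffL; rw [T_apply]; simp [eq_comm]

lemma coeffL_D (p : L) (n : ℤ) : coeffL (D p) n = ((n:ℂ)+1) * coeffL p (n+1) := by
  unfold D coeffL
  erw [AddMonoidAlgebra.coeff_finsuppSum, Finsupp.sum_apply]
  have key : ∀ (k : ℤ) (a : ℂ), ((((k : ℂ) * a) • T (k - 1) : L)).coeff n
      = if k = n + 1 then ((k:ℂ) * a) else 0 := by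
    intro k a
    erw [AddMonoidAlgebra.coeff_smul_apply]
    rw [T_apply]
    by_cases h : k = n + 1 <;> simp [h]
    · omega
  trans (Finsupp.sum p.coeff fun k a => if k = n + 1 then ((k:ℂ) * a) else 0)
  · exact Finsupp.sum_congr fun k _ => key k _
  rw [Finsupp.sum_ite_eq' p.coeff (n+1) (fun k a => (k:ℂ)*a)]
  by_cases h : (n+1) ∈ p.coeff.support <;> simp [h]
  right; simpa [add_comm] using Finsupp.notMem_support_iff.mp h

lemma coeffL_neg (a : L) (n : ℤ) : coeffL (-a) n = -coeffL a n := by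
  have := coeffL_smul (-1) a n
  simpa using this

lemma coeffL_sub (a b : L) (n : ℤ) : coeffL (a - b) n = coeffL a n - coeffL b n := by
  rw [sub_eq_add_neg, coeffL_add, coeffL_neg]; ring

lemma mem_Lplus_iff (p : L) : p ∈ Lplus ↔ ∀ n : ℤ, n < 0 → coeffL p n = 0 := Iff.rfl
lemma mem_Lminus_iff (p : L) : p ∈ Lminus ↔ ∀ n : ℤ, 0 < n → coeffL p n = 0 := Iff.rfl

lemma mem_B0_iff (v : V) : v ∈ B0 ↔ ∀ i, ∀ n : ℤ, n < 0 → coeffL (v i) n = 0 := by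
  constructor
  · intro h i; exact (mem_Lplus_iff _).mp (h i (Set.mem_univ i))
  · intro h i _; exact (mem_Lplus_iff _).mpr (h i)

lemma cndA_apply (m : ℤ) (i : Fin 6) (v : V) : cndA m i v = T m * v i := rfl

lemma cndB_apply (m : ℤ) (c : ℂ) (i j : Fin 6) (v : V) :
    cndB m c i j v = T m * (v i - c • (T (-1) * v j)) := rfl

lemma cndA_mem_iff (m : ℤ) (i : Fin 6) (v : V) :
    v ∈ Lminus.comap (cndA m i) ↔ ∀ n : ℤ, -m < n → coeffL (v i) n = 0 := by
  rw [Submodule.mem_comap, mem_Lminus_iff]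
  constructor
  · intro h n hn
    have := h (n + m) (by omega)
    rw [cndA_apply, coeffL_T_mul] at this
    simpa using this
  · intro h l hl
    rw [cndA_apply, coeffL_T_mul]
    exact h _ (by omega)

lemma cndB_mem_iff (m : ℤ) (c : ℂ) (i j : Fin 6) (v : V) :
    v ∈ Lminus.comap (cndB m c i j) ↔
      ∀ n : ℤ, -m < n → coeffL (v i) n = c * coeffL (v j) (n + 1) := by
  rw [Submodule.mem_comap, mem_Lminus_iff]
  have e : ∀ l : ℤ, coeffL (cndB m c i j v) l
      = coeffL (v i) (l - m) - c * coeffL (v j) (l - m + 1) := by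
    intro l
    rw [cndB_apply, coeffL_T_mul, coeffL_sub, coeffL_smul, coeffL_T_mul]
    ring_nf
  constructor
  · intro h n hn
    have := h (n + m) (by omega)
    rw [e] at this
    have e2 : n + m - m = n := by omega
    rw [e2] at this
    linear_combination this
  · intro h l hl
    rw [e]
    rw [h _ (by omega)]
    ring

lemma mem_B1_iff (k1 k2 k3 : ℤ) (v : V) : v ∈ B1 k1 k2 k3 ↔
    (∀ n : ℤ, 2 - k1 - k2 < n → coeffL (v 0) n = 0) ∧
    (∀ n : ℤ, 2 - k1 - k3 < n → coeffL (v 1) n = 0) ∧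
    (∀ n : ℤ, 2 - k2 - k3 < n → coeffL (v 2) n = 0) ∧
    (∀ n : ℤ, -(k2 + k3) < n → coeffL (v 3) n = (k1:ℂ) * coeffL (v 2) (n + 1)) ∧
    (∀ n : ℤ, -(k1 + k3) < n → coeffL (v 4) n = -(k2:ℂ) * coeffL (v 1) (n + 1)) ∧
    (∀ n : ℤ, -(k1 + k2) < n → coeffL (v 5) n = (k3:ℂ) * coeffL (v 0) (n + 1)) := by
  unfold B1
  simp only [Submodule.mem_inf]
  rw [cndA_mem_iff, cndA_mem_iff, cndA_mem_iff, cndB_mem_iff, cndB_mem_iff, cndB_mem_iff]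
  constructor
  · rintro ⟨⟨⟨⟨⟨h0, h1⟩, h2⟩, h3⟩, h4⟩, h5⟩
    refine ⟨fun n hn => h0 n (by omega), fun n hn => h1 n (by omega),
      fun n hn => h2 n (by omega), fun n hn => h3 n (by omega),
      fun n hn => h4 n (by omega), fun n hn => h5 n (by omega)⟩
  · rintro ⟨h0, h1, h2, h3, h4, h5⟩
    refine ⟨⟨⟨⟨⟨fun n hn => h0 n (by omega), fun n hn => h1 n (by omega)⟩,
      fun n hn => h2 n (by omega)⟩, fun n hn => h3 n (by omega)⟩,
      fun n hn => h4 n (by omega)⟩, fun n hn => h5 n (by omega)⟩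

-- ==================== negpation and the sufficiency lemma ====================

/-- the strictly negative part of a Laurent polynomial -/
def negp (p : L) : L := AddMonoidAlgebra.ofCoeff (Finsupp.filter (fun n => n < 0) p.coeff)

lemma coeffL_negp (p : L) (n : ℤ) :
    coeffL (negp p) n = if n < 0 then coeffL p n else 0 := by
  unfold negp coeffL
  erw [Finsupp.filter_apply]

lemma mem_B_of (κ k3 : ℤ) (z : V) (α β γ : ℂ)
    (hα : 3 - κ - κ ≤ 0 → α = 0)
    (hβ : 3 - κ - k3 ≤ 0 → β = 0)
    (hγ : 3 - κ - k3 ≤ 0 → γ = 0)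
    (h0 : ∀ n : ℤ, 2 - κ - κ < n → n < 0 → coeffL (z 0) n = 0)
    (h1 : ∀ n : ℤ, 2 - κ - k3 < n → n < 0 → coeffL (z 1) n = 0)
    (h2 : ∀ n : ℤ, 2 - κ - k3 < n → n < 0 → coeffL (z 2) n = 0)
    (h3 : ∀ n : ℤ, -(κ + k3) < n → n ≤ -2 → coeffL (z 3) n = (κ:ℂ) * coeffL (z 2) (n + 1))
    (h3e : -(κ + k3) < -1 → coeffL (z 3) (-1) = (κ:ℂ) * γ)
    (h4 : ∀ n : ℤ, -(κ + k3) < n → n ≤ -2 → coeffL (z 4) n = -(κ:ℂ) * coeffL (z 1) (n + 1))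
    (h4e : -(κ + k3) < -1 → coeffL (z 4) (-1) = -(κ:ℂ) * β)
    (h5 : ∀ n : ℤ, -(κ + κ) < n → n ≤ -2 → coeffL (z 5) n = (k3:ℂ) * coeffL (z 0) (n + 1))
    (h5e : -(κ + κ) < -1 → coeffL (z 5) (-1) = (k3:ℂ) * α) :
    z ∈ B κ κ k3 := by
  classical
  set ee : Fin 6 → ℂ := ![α, β, γ, 0, 0, 0] with hee
  set z1 : V := fun i => negp (z i) + (ee i) • T 0 with hz1
  have cz1 : ∀ (i : Fin 6) (n : ℤ),
      coeffL (z1 i) n = (if n < 0 then coeffL (z i) n else 0) + ee i * (if n = 0 then 1 else 0) := by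
    intro i n
    rw [hz1]
    simp only []
    rw [coeffL_add, coeffL_negp, coeffL_smul, coeffL_T]
  have hz1mem : z1 ∈ B1 κ κ k3 := by
    rw [mem_B1_iff]
    refine ⟨?_, ?_, ?_, ?_, ?_, ?_⟩
    · intro n hn
      rw [cz1]
      rcases lt_trichotomy n 0 with h | h | h
      · simp only [if_pos h, if_neg (by omega : ¬ n = 0)]
        rw [h0 n (by omega) h]; ring
      · simp only [if_neg (by omega : ¬ n < 0), if_pos h]
        have : ee 0 = α := by rw [hee]; rfl
        rw [this, hα (by omega)]; ring
      · simp only [if_neg (by omega : ¬ n < 0), if_neg (by omega : ¬ n = 0)]; ring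
    · intro n hn
      rw [cz1]
      rcases lt_trichotomy n 0 with h | h | h
      · simp only [if_pos h, if_neg (by omega : ¬ n = 0)]
        rw [h1 n (by omega) h]; ring
      · simp only [if_neg (by omega : ¬ n < 0), if_pos h]
        have : ee 1 = β := by rw [hee]; rfl
        rw [this, hβ (by omega)]; ring
      · simp only [if_neg (by omega : ¬ n < 0), if_neg (by omega : ¬ n = 0)]; ring
    · intro n hn
      rw [cz1]
      rcases lt_trichotomy n 0 with h | h | h
      · simp only [if_pos h, if_neg (by omega : ¬ n = 0)]
        rw [h2 n (by omega) h]; ring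
      · simp only [if_neg (by omega : ¬ n < 0), if_pos h]
        have : ee 2 = γ := by rw [hee]; rfl
        rw [this, hγ (by omega)]; ring
      · simp only [if_neg (by omega : ¬ n < 0), if_neg (by omega : ¬ n = 0)]; ring
    · intro n hn
      rw [cz1, cz1]
      have e3 : ee 3 = 0 := by rw [hee]; rfl
      have e2 : ee 2 = γ := by rw [hee]; rfl
      rw [e3, e2]
      rcases le_or_gt n (-2) with h | h
      · simp only [if_pos (by omega : n < 0), if_pos (by omega : n + 1 < 0),
          if_neg (by omega : ¬ n = 0), if_neg (by omega : ¬ n + 1 = 0)]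
        rw [h3 n hn h]; ring
      · rcases eq_or_lt_of_le (by omega : -1 ≤ n) with h' | h'
        · rw [← h']
          simp only [if_pos (by omega : (-1:ℤ) < 0), if_neg (by omega : ¬ (-1:ℤ) = 0),
            if_neg (by omega : ¬ (-1:ℤ) + 1 < 0), if_pos (by omega : (-1:ℤ) + 1 = 0)]
          rw [h3e (by omega)]; ring
        · simp only [if_neg (by omega : ¬ n < 0), if_neg (by omega : ¬ n + 1 < 0),
            if_neg (by omega : ¬ n + 1 = 0), zero_mul, mul_zero, add_zero, zero_add]
    · intro n hn
      rw [cz1, cz1]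
      have e4 : ee 4 = 0 := by rw [hee]; rfl
      have e1 : ee 1 = β := by rw [hee]; rfl
      rw [e4, e1]
      rcases le_or_gt n (-2) with h | h
      · simp only [if_pos (by omega : n < 0), if_pos (by omega : n + 1 < 0),
          if_neg (by omega : ¬ n = 0), if_neg (by omega : ¬ n + 1 = 0)]
        rw [h4 n hn h]; ring
      · rcases eq_or_lt_of_le (by omega : -1 ≤ n) with h' | h'
        · rw [← h']
          simp only [if_pos (by omega : (-1:ℤ) < 0), if_neg (by omega : ¬ (-1:ℤ) = 0),
            if_neg (by omega : ¬ (-1:ℤ) + 1 < 0), if_pos (by omega : (-1:ℤ) + 1 = 0)]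
          rw [h4e (by omega)]; ring
        · simp only [if_neg (by omega : ¬ n < 0), if_neg (by omega : ¬ n + 1 < 0),
            if_neg (by omega : ¬ n + 1 = 0), zero_mul, mul_zero, add_zero, zero_add]
    · intro n hn
      rw [cz1, cz1]
      have e5 : ee 5 = 0 := by rw [hee]; rfl
      have e0 : ee 0 = α := by rw [hee]; rfl
      rw [e5, e0]
      rcases le_or_gt n (-2) with h | h
      · simp only [if_pos (by omega : n < 0), if_pos (by omega : n + 1 < 0),
          if_neg (by omega : ¬ n = 0), if_neg (by omega : ¬ n + 1 = 0)]
        rw [h5 n hn h]; ring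
      · rcases eq_or_lt_of_le (by omega : -1 ≤ n) with h' | h'
        · rw [← h']
          simp only [if_pos (by omega : (-1:ℤ) < 0), if_neg (by omega : ¬ (-1:ℤ) = 0),
            if_neg (by omega : ¬ (-1:ℤ) + 1 < 0), if_pos (by omega : (-1:ℤ) + 1 = 0)]
          rw [h5e (by omega)]; ring
        · simp only [if_neg (by omega : ¬ n < 0), if_neg (by omega : ¬ n + 1 < 0),
            if_neg (by omega : ¬ n + 1 = 0), zero_mul, mul_zero, add_zero, zero_add]
  have hz0mem : z - z1 ∈ B0 := by
    rw [mem_B0_iff]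
    intro i n hn
    have : coeffL ((z - z1) i) n = coeffL (z i) n - coeffL (z1 i) n := by
      have : (z - z1) i = z i - z1 i := rfl
      rw [this, coeffL_sub]
    rw [this, cz1, if_pos hn, if_neg (by omega : ¬ n = 0)]
    ring
  have : z = (z - z1) + z1 := by abel
  rw [this, B]
  exact Submodule.add_mem_sup hz0mem hz1mem

-- ==================== elimination lemmas for membership in B ====================

lemma B_elim {κ k3 : ℤ} {w : V} (hw : w ∈ B κ κ k3) :
    (∀ n : ℤ, 2 - κ - κ < n → n < 0 → coeffL (w 0) n = 0) ∧
    (∀ n : ℤ, 2 - κ - k3 < n → n < 0 → coeffL (w 1) n = 0) ∧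
    (∀ n : ℤ, 2 - κ - k3 < n → n < 0 → coeffL (w 2) n = 0) ∧
    (∀ n : ℤ, -(κ + k3) < n → n ≤ -2 → coeffL (w 3) n = (κ:ℂ) * coeffL (w 2) (n + 1)) ∧
    (∀ n : ℤ, -(κ + k3) < n → n ≤ -2 → coeffL (w 4) n = -(κ:ℂ) * coeffL (w 1) (n + 1)) ∧
    (∀ n : ℤ, -(κ + κ) < n → n ≤ -2 → coeffL (w 5) n = (k3:ℂ) * coeffL (w 0) (n + 1)) ∧
    (3 ≤ κ + k3 → coeffL (w 3) (-1) = 0) ∧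
    (κ = 0 → 2 ≤ κ + k3 → coeffL (w 3) (-1) = 0) ∧
    (3 ≤ κ + k3 → coeffL (w 4) (-1) = 0) ∧
    (κ = 0 → 2 ≤ κ + k3 → coeffL (w 4) (-1) = 0) ∧
    (2 ≤ κ → coeffL (w 5) (-1) = 0) := by
  obtain ⟨u, hu, v, hv, huv⟩ := Submodule.mem_sup.mp hw
  rw [mem_B0_iff] at hu
  rw [mem_B1_iff] at hv
  obtain ⟨v0, v1, v2, v3, v4, v5⟩ := hv
  have cw : ∀ (i : Fin 6) (n : ℤ), coeffL (w i) n = coeffL (u i) n + coeffL (v i) n := by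
    intro i n
    rw [← huv]
    have : (u + v) i = u i + v i := rfl
    rw [this, coeffL_add]
  have cwneg : ∀ (i : Fin 6) (n : ℤ), n < 0 → coeffL (w i) n = coeffL (v i) n := by
    intro i n hn
    rw [cw, hu i n hn]; ring
  refine ⟨?_, ?_, ?_, ?_, ?_, ?_, ?_, ?_, ?_, ?_, ?_⟩
  · intro n hb hn; rw [cwneg 0 n hn]; exact v0 n (by omega)
  · intro n hb hn; rw [cwneg 1 n hn]; exact v1 n (by omega)
  · intro n hb hn; rw [cwneg 2 n hn]; exact v2 n (by omega)
  · intro n hb hn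
    rw [cwneg 3 n (by omega), cwneg 2 (n+1) (by omega)]
    exact v3 n hb
  · intro n hb hn
    rw [cwneg 4 n (by omega), cwneg 1 (n+1) (by omega)]
    exact v4 n hb
  · intro n hb hn
    rw [cwneg 5 n (by omega), cwneg 0 (n+1) (by omega)]
    exact v5 n hb
  · intro hq
    rw [cwneg 3 (-1) (by omega), v3 (-1) (by omega)]
    have : coeffL (v 2) (-1 + 1) = 0 := v2 0 (by omega)
    rw [show (-1:ℤ) + 1 = 0 from by omega] at this ⊢
    rw [this]; ring
  · intro hk hq
    rw [cwneg 3 (-1) (by omega), v3 (-1) (by omega), hk]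
    push_cast; ring
  · intro hq
    rw [cwneg 4 (-1) (by omega), v4 (-1) (by omega)]
    have : coeffL (v 1) (-1 + 1) = 0 := v1 0 (by omega)
    rw [show (-1:ℤ) + 1 = 0 from by omega] at this ⊢
    rw [this]; ring
  · intro hk hq
    rw [cwneg 4 (-1) (by omega), v4 (-1) (by omega), hk]
    push_cast; ring
  · intro hκ
    rw [cwneg 5 (-1) (by omega), v5 (-1) (by omega)]
    have : coeffL (v 0) (-1 + 1) = 0 := v0 0 (by omega)
    rw [show (-1:ℤ) + 1 = 0 from by omega] at this ⊢
    rw [this]; ring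

-- ==================== coefficient formulas for the operators ====================

section opcoeff
variable (z : V) (n : ℤ) (κ k3 : ℤ)

lemma cE0 : coeffL (E'op z 0) n = ((n:ℂ)+1) * coeffL (z 0) (n+1) := by
  have : E'op z 0 = D (z 0) + 0 := rfl
  rw [this, coeffL_add, coeffL_zero, coeffL_D]; ring

lemma cE1 : coeffL (E'op z 1) n = ((n:ℂ)+1) * coeffL (z 1) (n+1) := by
  have : E'op z 1 = D (z 1) + 0 := rfl
  rw [this, coeffL_add, coeffL_zero, coeffL_D]; ring

lemma cE2 : coeffL (E'op z 2) n = ((n:ℂ)+1) * coeffL (z 2) (n+1) + coeffL (z 1) n := by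
  have : E'op z 2 = D (z 2) + z 1 := rfl
  rw [this, coeffL_add, coeffL_D]

lemma cE3 : coeffL (E'op z 3) n = ((n:ℂ)+1) * coeffL (z 3) (n+1) - coeffL (z 4) n := by
  have : E'op z 3 = D (z 3) + -z 4 := rfl
  rw [this, coeffL_add, coeffL_neg, coeffL_D]; ring

lemma cE4 : coeffL (E'op z 4) n = ((n:ℂ)+1) * coeffL (z 4) (n+1) := by
  have : E'op z 4 = D (z 4) + 0 := rfl
  rw [this, coeffL_add, coeffL_zero, coeffL_D]; ring

lemma cE5 : coeffL (E'op z 5) n = ((n:ℂ)+1) * coeffL (z 5) (n+1) := by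
  have : E'op z 5 = D (z 5) + 0 := rfl
  rw [this, coeffL_add, coeffL_zero, coeffL_D]; ring

lemma cF0 : coeffL (F'op κ κ k3 z 0) n = ((3:ℂ) - κ - κ - n) * coeffL (z 0) (n-1) := by
  have : F'op κ κ k3 z 0 =
      (((2 - κ - κ : ℤ) : ℂ) • (T 1 * z 0) - T 2 * D (z 0)) + 0 := rfl
  rw [this, coeffL_add, coeffL_zero, coeffL_sub, coeffL_smul, coeffL_T_mul, coeffL_T_mul,
    coeffL_D, show n - 2 + 1 = n - 1 from by omega]
  push_cast; ring

lemma cF1 : coeffL (F'op κ κ k3 z 1) n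
    = ((3:ℂ) - κ - k3 - n) * coeffL (z 1) (n-1) + coeffL (z 2) n := by
  have : F'op κ κ k3 z 1 =
      (((2 - κ - k3 : ℤ) : ℂ) • (T 1 * z 1) - T 2 * D (z 1)) + z 2 := rfl
  rw [this, coeffL_add, coeffL_sub, coeffL_smul, coeffL_T_mul, coeffL_T_mul,
    coeffL_D, show n - 2 + 1 = n - 1 from by omega]
  push_cast; ring

lemma cF2 : coeffL (F'op κ κ k3 z 2) n = ((3:ℂ) - κ - k3 - n) * coeffL (z 2) (n-1) := by
  have : F'op κ κ k3 z 2 =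
      (((2 - κ - k3 : ℤ) : ℂ) • (T 1 * z 2) - T 2 * D (z 2)) + 0 := rfl
  rw [this, coeffL_add, coeffL_zero, coeffL_sub, coeffL_smul, coeffL_T_mul, coeffL_T_mul,
    coeffL_D, show n - 2 + 1 = n - 1 from by omega]
  push_cast; ring

lemma cF3 : coeffL (F'op κ κ k3 z 3) n
    = (κ:ℂ) * coeffL (z 2) n - ((κ:ℂ) + k3 + n - 1) * coeffL (z 3) (n-1) := by
  have : F'op κ κ k3 z 3 =
      ((κ : ℂ) • z 2 - ((κ + k3 : ℤ) : ℂ) • (T 1 * z 3) - T 2 * D (z 3)) + 0 := rfl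
  rw [this, coeffL_add, coeffL_zero, coeffL_sub, coeffL_sub, coeffL_smul, coeffL_smul,
    coeffL_T_mul, coeffL_T_mul, coeffL_D, show n - 2 + 1 = n - 1 from by omega]
  push_cast; ring

lemma cF4 : coeffL (F'op κ κ k3 z 4) n
    = -(κ:ℂ) * coeffL (z 1) n - ((κ:ℂ) + k3 + n - 1) * coeffL (z 4) (n-1)
      - coeffL (z 3) n := by
  have : F'op κ κ k3 z 4 =
      (-((κ : ℂ) • z 1) - ((κ + k3 : ℤ) : ℂ) • (T 1 * z 4) - T 2 * D (z 4)) + -z 3 := rfl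
  rw [this, coeffL_add, coeffL_neg, coeffL_sub, coeffL_sub, coeffL_neg, coeffL_smul, coeffL_smul,
    coeffL_T_mul, coeffL_T_mul, coeffL_D, show n - 2 + 1 = n - 1 from by omega]
  push_cast; ring

lemma cF5 : coeffL (F'op κ κ k3 z 5) n
    = (k3:ℂ) * coeffL (z 0) n - ((κ:ℂ) + κ + n - 1) * coeffL (z 5) (n-1) := by
  have : F'op κ κ k3 z 5 =
      ((k3 : ℂ) • z 0 - ((κ + κ : ℤ) : ℂ) • (T 1 * z 5) - T 2 * D (z 5)) + 0 := rfl
  rw [this, coeffL_add, coeffL_zero, coeffL_sub, coeffL_sub, coeffL_smul, coeffL_smul,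
    coeffL_T_mul, coeffL_T_mul, coeffL_D, show n - 2 + 1 = n - 1 from by omega]
  push_cast; ring

end opcoeff

lemma eq_of_int_factor (m : ℤ) (hm : m ≠ 0) {x y : ℂ} (h : (m:ℂ) * x = (m:ℂ) * y) :
    x = y := mul_left_cancel₀ (Int.cast_ne_zero.mpr hm) h

set_option maxHeartbeats 2000000 in
/-- If `k₁ = k₂ = κ` and none of `κ = 2`, `k₃ = 3 − κ`, `k₃ = 5 − κ`,
`(κ, k₃) = (1, 0)` holds, then the 𝔰′-invariant part of `H¹(ℂℙ¹, T₂)` is zero. -/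
theorem stmt_10 (κ k3 : ℤ) (h2 : κ ≠ 2) (h3 : k3 ≠ 3 - κ) (h5 : k3 ≠ 5 - κ)
    (h10 : ¬(κ = 1 ∧ k3 = 0)) :
    ∀ z : V, E'op z ∈ B κ κ k3 → F'op κ κ k3 z ∈ B κ κ k3 → z ∈ B κ κ k3 := by
  intro z hE hF
  obtain ⟨E0, E1, E2, E3, E4, E5, E3e, E3z, E4e, E4z, E5e⟩ := B_elim hE
  obtain ⟨F0, F1, F2, F3, F4, F5, F3e, F3z, F4e, F4z, F5e⟩ := B_elim hF
  -- vanishing of a₁₂ in the critical range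
  have G0 : ∀ n : ℤ, 2 - κ - κ < n → n < 0 → coeffL (z 0) n = 0 := by
    intro n hb hn
    rcases le_or_gt n (-2) with h | h
    · have hf := F0 (n+1) (by omega) (by omega)
      rw [cF0] at hf
      rw [show n+1-1 = n from by omega] at hf
      refine eq_of_int_factor (2 - κ - κ - n) (by omega) ?_
      push_cast at hf ⊢
      linear_combination hf
    · have hn1 : n = -1 := by omega
      subst hn1
      have he := E0 (-2) (by omega) (by omega)
      rw [cE0] at he
      rw [show (-2:ℤ)+1 = -1 from by omega] at he
      refine eq_of_int_factor (-1) (by omega) ?_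
      push_cast at he ⊢
      linear_combination he
  -- vanishing of a₁₃ strictly above the bottom of the critical range
  have G1L : ∀ m : ℤ, 3 - κ - k3 < m → m < 0 → coeffL (z 1) m = 0 := by
    intro m hb hm
    have he := E1 (m-1) (by omega) (by omega)
    rw [cE1] at he
    rw [show m-1+1 = m from by omega] at he
    refine eq_of_int_factor m (by omega) ?_
    push_cast at he ⊢
    linear_combination he
  -- vanishing of a₂₃ in the critical range, down to -2
  have G2L : ∀ m : ℤ, 2 - κ - k3 < m → m ≤ -2 → coeffL (z 2) m = 0 := by
    intro m hb hm
    have hf := F2 (m+1) (by omega) (by omega)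
    rw [cF2] at hf
    rw [show m+1-1 = m from by omega] at hf
    refine eq_of_int_factor (2 - κ - k3 - m) (by omega) ?_
    push_cast at hf ⊢
    linear_combination hf
  -- vanishing of a₂₃ in the whole critical range
  have G2 : ∀ m : ℤ, 2 - κ - k3 < m → m < 0 → coeffL (z 2) m = 0 := by
    intro m hb hm
    rcases le_or_gt m (-2) with h | h
    · exact G2L m hb h
    · have hm1 : m = -1 := by omega
      subst hm1
      rcases eq_or_ne (κ + k3) 4 with hq | hq
      · have hf := F1 (-1) (by omega) (by omega)
        rw [cF1] at hf
        rw [show (-1:ℤ)-1 = -2 from by omega] at hf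
        have hc : ((κ + k3 : ℤ) : ℂ) = 4 := by exact_mod_cast congrArg (Int.cast : ℤ → ℂ) hq
        push_cast at hf hc ⊢
        linear_combination hf + coeffL (z 1) (-2) * hc
      · -- here κ + k3 ≥ 6
        have he := E2 (-2) (by omega) (by omega)
        rw [cE2] at he
        rw [show (-2:ℤ)+1 = -1 from by omega] at he
        have hz1 : coeffL (z 1) (-2) = 0 := G1L (-2) (by omega) (by omega)
        rw [hz1] at he
        refine eq_of_int_factor (-1) (by omega) ?_
        push_cast at he ⊢
        linear_combination he
  -- vanishing of a₁₃ in the whole critical range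
  have G1 : ∀ m : ℤ, 2 - κ - k3 < m → m < 0 → coeffL (z 1) m = 0 := by
    intro m hb hm
    rcases lt_or_ge (3 - κ - k3) m with h | h
    · exact G1L m h hm
    · have hm3 : m = 3 - κ - k3 := by omega
      rcases eq_or_ne (κ + k3) 4 with hq | hq
      · have he := E2 (-1) (by omega) (by omega)
        rw [cE2] at he
        rw [show (-1:ℤ)+1 = 0 from by omega] at he
        rw [show m = -1 from by omega]
        push_cast at he ⊢
        linear_combination he
      · -- here κ + k3 ≥ 6
        have hf := F1 (4-κ-k3) (by omega) (by omega)
        rw [cF1] at hf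
        rw [show 4-κ-k3-1 = 3-κ-k3 from by omega] at hf
        have hz2 : coeffL (z 2) (4-κ-k3) = 0 := G2L _ (by omega) (by omega)
        rw [hz2] at hf
        rw [hm3]
        refine eq_of_int_factor (-1) (by omega) ?_
        push_cast at hf ⊢
        linear_combination hf
  -- the b₁-relations
  have G3 : ∀ n : ℤ, -(κ + k3) < n → n ≤ -2 →
      coeffL (z 3) n = (κ:ℂ) * coeffL (z 2) (n + 1) := by
    intro n hb hn
    rcases le_or_gt n (-3) with h | h
    · have hf := F3 (n+1) (by omega) (by omega)
      rw [cF3, cF2] at hf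
      rw [show n+1-1 = n from by omega, show n+1+1-1 = n+1 from by omega] at hf
      refine eq_of_int_factor (κ + k3 + n) (by omega) ?_
      push_cast at hf ⊢
      linear_combination -hf
    · have hn2 : n = -2 := by omega
      subst hn2
      have hz2 : coeffL (z 2) (-1) = 0 := G2 (-1) (by omega) (by omega)
      have hf := F3e (by omega)
      rw [cF3] at hf
      rw [show (-1:ℤ)-1 = -2 from by omega] at hf
      rw [hz2] at hf
      rw [show (-2:ℤ)+1 = -1 from by omega, hz2]
      refine eq_of_int_factor (κ + k3 - 2) (by omega) ?_
      push_cast at hf ⊢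
      linear_combination -hf
  -- the b₂-relations
  have G4 : ∀ n : ℤ, -(κ + k3) < n → n ≤ -2 →
      coeffL (z 4) n = -(κ:ℂ) * coeffL (z 1) (n + 1) := by
    intro n hb hn
    rcases le_or_gt n (-3) with h | h
    · have hf := F4 (n+1) (by omega) (by omega)
      rw [cF4, cF1] at hf
      rw [show n+1-1 = n from by omega, show n+1+1-1 = n+1 from by omega] at hf
      have hg3 := G3 (n+1) (by omega) (by omega)
      refine eq_of_int_factor (κ + k3 + n) (by omega) ?_
      push_cast at hf hg3 ⊢
      linear_combination -hf - hg3
    · have hn2 : n = -2 := by omega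
      subst hn2
      have hz1 : coeffL (z 1) (-1) = 0 := G1 (-1) (by omega) (by omega)
      have he := E4 (-3) (by omega) (by omega)
      rw [cE4, cE1] at he
      rw [show (-3:ℤ)+1 = -2 from by omega] at he
      rw [show (-2:ℤ)+1 = -1 from by omega] at he
      rw [hz1] at he
      rw [show (-2:ℤ)+1 = -1 from by omega, hz1]
      refine eq_of_int_factor (-2) (by omega) ?_
      push_cast at he ⊢
      linear_combination he
  -- the b₃-relations
  have G5 : ∀ n : ℤ, -(κ + κ) < n → n ≤ -2 →
      coeffL (z 5) n = (k3:ℂ) * coeffL (z 0) (n + 1) := by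
    intro n hb hn
    rcases le_or_gt n (-3) with h | h
    · have hf := F5 (n+1) (by omega) (by omega)
      rw [cF5, cF0] at hf
      rw [show n+1-1 = n from by omega, show n+1+1-1 = n+1 from by omega] at hf
      refine eq_of_int_factor (κ + κ + n) (by omega) ?_
      push_cast at hf ⊢
      linear_combination -hf
    · have hn2 : n = -2 := by omega
      subst hn2
      -- here κ ≥ 2, hence κ ≥ 3
      have hz0 : coeffL (z 0) (-1) = 0 := G0 (-1) (by omega) (by omega)
      have hf := F5e (by omega)
      rw [cF5] at hf
      rw [show (-1:ℤ)-1 = -2 from by omega] at hf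
      rw [hz0] at hf
      rw [show (-2:ℤ)+1 = -1 from by omega, hz0]
      refine eq_of_int_factor (κ + κ - 2) (by omega) ?_
      push_cast at hf ⊢
      linear_combination -hf
  -- edge values
  have K4 : (3 ≤ κ + k3 ∨ (κ = 0 ∧ 2 ≤ κ + k3)) → coeffL (z 4) (-1) = 0 := by
    intro hc
    have he : coeffL (E'op z 3) (-1) = 0 := by
      rcases hc with hq | ⟨hκ0, hq⟩
      · exact E3e hq
      · exact E3z hκ0 hq
    rw [cE3] at he
    rw [show (-1:ℤ)+1 = 0 from by omega] at he
    push_cast at he ⊢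
    linear_combination -he
  have K3 : (3 ≤ κ + k3 ∨ (κ = 0 ∧ 2 ≤ κ + k3)) → coeffL (z 3) (-1) = 0 := by
    intro hc
    rcases hc with hq | ⟨hκ0, hq⟩
    · -- here κ + k3 ≥ 4
      have hz1 : coeffL (z 1) (-1) = 0 := G1 (-1) (by omega) (by omega)
      have hz4 : coeffL (z 4) (-2) = 0 := by
        have hg := G4 (-2) (by omega) (by omega)
        rw [show (-2:ℤ)+1 = -1 from by omega, hz1] at hg
        rw [hg]; ring
      have hf := F4e (by omega)
      rw [cF4] at hf
      rw [show (-1:ℤ)-1 = -2 from by omega] at hf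
      rw [hz1, hz4] at hf
      push_cast at hf ⊢
      linear_combination -hf
    · -- κ = 0, and then κ + k3 = 2 or ≥ 3; handle both
      rcases le_or_gt 3 (κ + k3) with hq3 | hq3
      · -- reduce to the first case
        have hz1 : coeffL (z 1) (-1) = 0 := G1 (-1) (by omega) (by omega)
        have hz4 : coeffL (z 4) (-2) = 0 := by
          have hg := G4 (-2) (by omega) (by omega)
          rw [show (-2:ℤ)+1 = -1 from by omega, hz1] at hg
          rw [hg]; ring
        have hf := F4e (by omega)
        rw [cF4] at hf
        rw [show (-1:ℤ)-1 = -2 from by omega] at hf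
        rw [hz1, hz4] at hf
        push_cast at hf ⊢
        linear_combination -hf
      · -- κ = 0 and κ + k3 = 2, i.e. k3 = 2
        have hk2 : k3 = 2 := by omega
        subst hκ0; subst hk2
        have hf := F4z rfl (by omega)
        rw [cF4] at hf
        rw [show (-1:ℤ)-1 = -2 from by omega] at hf
        push_cast at hf ⊢
        linear_combination -hf
  have K5 : 2 ≤ κ → coeffL (z 5) (-1) = 0 := by
    intro hκ
    have he := E5 (-2) (by omega) (by omega)
    rw [cE5, cE0] at he
    rw [show (-2:ℤ)+1 = -1 from by omega] at he
    rw [show (-1:ℤ)+1 = 0 from by omega] at he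
    refine eq_of_int_factor (-1) (by omega) ?_
    push_cast at he ⊢
    linear_combination he
  -- assemble
  refine mem_B_of κ k3 z
    (if κ = 1 then coeffL (z 5) (-1) / (k3:ℂ) else 0)
    (if κ = 0 then 0 else -coeffL (z 4) (-1) / (κ:ℂ))
    (if κ = 0 then 0 else coeffL (z 3) (-1) / (κ:ℂ))
    ?_ ?_ ?_ G0 G1 G2 G3 ?_ G4 ?_ G5 ?_
  · intro hb
    rw [if_neg (by omega : ¬ κ = 1)]
  · intro hb
    by_cases hκ0 : κ = 0
    · rw [if_pos hκ0]
    · rw [if_neg hκ0, K4 (Or.inl (by omega))]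
      ring
  · intro hb
    by_cases hκ0 : κ = 0
    · rw [if_pos hκ0]
    · rw [if_neg hκ0, K3 (Or.inl (by omega))]
      ring
  · -- h3e
    intro hb
    by_cases hκ0 : κ = 0
    · rw [if_pos hκ0, hκ0]
      rcases le_or_gt 3 (κ + k3) with hq | hq
      · rw [K3 (Or.inl hq)]; push_cast; ring
      · rw [K3 (Or.inr ⟨hκ0, by omega⟩)]; push_cast; ring
    · rw [if_neg hκ0]
      have : (κ:ℂ) ≠ 0 := Int.cast_ne_zero.mpr hκ0
      field_simp
  · -- h4e
    intro hb
    by_cases hκ0 : κ = 0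
    · rw [if_pos hκ0, hκ0]
      rcases le_or_gt 3 (κ + k3) with hq | hq
      · rw [K4 (Or.inl hq)]; push_cast; ring
      · rw [K4 (Or.inr ⟨hκ0, by omega⟩)]; push_cast; ring
    · rw [if_neg hκ0]
      have : (κ:ℂ) ≠ 0 := Int.cast_ne_zero.mpr hκ0
      field_simp
  · -- h5e
    intro hb
    by_cases hκ1 : κ = 1
    · rw [if_pos hκ1]
      have hk3 : k3 ≠ 0 := fun hk => h10 ⟨hκ1, hk⟩
      have : (k3:ℂ) ≠ 0 := Int.cast_ne_zero.mpr hk3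
      field_simp
    · rw [if_neg hκ1, K5 (by omega)]
      ring
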